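/- Let C be a Grothendieck category with a Gabriel–Popescu embedding (U, Λ, S, Q). If there exists a functor H : C → Mod Λ preserving all small colimits such that Q ∘ H is naturally isomorphic to the identity functor of C, then C satisfies Ab6: for every object M of C, every index set J, and every family (S_j)_{j∈J} where each S_j is a nonempty upward-directed set of subobjects of M, one has, in the complete lattice of subobjects of M, the equality ⨅_{j∈J} (sup S_j) = ⨆_{f ∈ ∏_{j∈J} S_j} ⨅_{j∈J} f(j), where the supremum on the right ranges over all choice functions f with f(j) ∈ S_j for all j. -/

import Mathlib

open CategoryTheory Limits Opposite

universe v u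

/-- The old (Mathlib, December 2024) right action of `End X` (for `X : Cᵒᵖ`) on `unop X ⟶ Y`. -/
instance oldMulActionEndOpRight {C : Type u} [Category.{v} C] {X : Cᵒᵖ} {Y : C} :
    MulAction (End X) (unop X ⟶ Y) where
  smul r f := r.unop ≫ f
  one_smul := Category.id_comp
  mul_smul _ _ _ := Category.assoc _ _ _

/-- The old (Mathlib, December 2024) `Module (End X) (unop X ⟶ Y)` instance. -/
instance oldModuleEndOpRight {C : Type u} [Category.{v} C] [Preadditive C] {X : Cᵒᵖ} {Y : C} :
    Module (End X) (unop X ⟶ Y) where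
  smul_add _ _ _ := Preadditive.comp_add _ _ _ _ _ _
  smul_zero _ := Limits.comp_zero
  add_smul _ _ _ := Preadditive.add_comp _ _ _ _ _ _
  zero_smul _ := Limits.zero_comp

/-- The old (Mathlib, December 2024) `preadditiveCoyonedaObj`. -/
def oldPreadditiveCoyonedaObj {C : Type u} [Category.{v} C] [Preadditive C] (X : Cᵒᵖ) :
    C ⥤ ModuleCat.{v} (End X) where
  obj Y := ModuleCat.of _ (unop X ⟶ Y)
  map f := ModuleCat.ofHom
    { toFun := fun g => g ≫ f
      map_add' := fun _ _ => Preadditive.add_comp _ _ _ _ _ _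
      map_smul' := fun _ _ => Category.assoc _ _ _ }

/-- A Gabriel–Popescu embedding for a Grothendieck category `C`: a generator `U`,
the functor `S = Hom_C(U, -)` to right modules over `Λ = End U` (realized as
`preadditiveCoyonedaObj (op U) : C ⥤ ModuleCat (End (op U))`, where the module structure
on `U ⟶ X` is given by precomposition, i.e. the right `End U`-module structure),
together with a left adjoint `Q` of `S` which is exact, such that `S` is fully faithful. -/
structure GabrielPopescuEmbedding (C : Type u) [Category.{v} C] [Abelian C] where
  U : C
  isSeparator : IsSeparator U
  Q : ModuleCat.{v} (End (op U)) ⥤ C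
  adj : Q ⊣ oldPreadditiveCoyonedaObj (op U)
  qExact : PreservesFiniteLimits Q
  sFull : (oldPreadditiveCoyonedaObj (op U)).Full
  sFaithful : (oldPreadditiveCoyonedaObj (op U)).Faithful

/-- Fixes the universe of the `CompleteLattice (Subobject B)` instance to `v`, as in the old
(Mathlib, December 2024) instance, which used `[WellPowered C]` and `HasWidePullbacks.{v}`. -/
noncomputable instance oldSubobjectCompleteLattice {C : Type u} [Category.{v} C] [Abelian C] [HasLimits C]
    [HasColimits C] [WellPowered.{v} C] {B : C} : CompleteLattice (Subobject B) :=
  Subobject.instCompleteLattice.{v, v, u}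

noncomputable section GPAux
set_option linter.unusedSectionVars false
set_option linter.unusedVariables false
set_option maxHeartbeats 1000000

section Aux
variable {A : Type u} [Category.{v} A] [Abelian A]

lemma GP.imageSubobject_epi_comp {X' X Y : A} (h : X' ⟶ X) [Epi h] (f : X ⟶ Y) :
    imageSubobject (h ≫ f) = imageSubobject f := by
  refine le_antisymm (imageSubobject_comp_le h f) ?_
  have sq : CommSq (factorThruImageSubobject (h ≫ f)) h ((imageSubobject (h ≫ f)).arrow) f :=
    ⟨by simp⟩
  haveI : StrongEpi h := strongEpi_of_epi h
  exact imageSubobject_le f sq.lift sq.fac_right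

lemma GP.imageSubobject_le_iff {X Y : A} (f : X ⟶ Y) (P : Subobject Y) :
    imageSubobject f ≤ P ↔ P.Factors f := by
  constructor
  · intro hle
    have h : (factorThruImageSubobject f ≫ Subobject.ofLE _ _ hle) ≫ P.arrow = f := by
      simp [Subobject.ofLE_arrow]
    rw [← h]
    exact Subobject.factors_comp_arrow _
  · intro hf
    exact imageSubobject_le f (P.factorThru f hf) (P.factorThru_arrow f hf)

lemma GP.factors_iff_exists {X Y : A} (P : Subobject Y) (f : X ⟶ Y) :
    P.Factors f ↔ ∃ g : X ⟶ (P : A), g ≫ P.arrow = f :=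
  ⟨fun h => ⟨P.factorThru f h, P.factorThru_arrow f h⟩,
   fun ⟨g, hg⟩ => hg ▸ Subobject.factors_comp_arrow g⟩

lemma GP.exists_factor_iff_range_le {R : Type v} [Ring R] {X Y M : ModuleCat.{v} R}
    (i : Y ⟶ M) [Mono i] (g : X ⟶ M) :
    (∃ k : X ⟶ Y, k ≫ i = g) ↔ LinearMap.range g.hom ≤ LinearMap.range i.hom := by
  constructor
  · rintro ⟨k, rfl⟩
    rw [ModuleCat.hom_comp]
    exact LinearMap.range_comp_le_range _ _
  · intro hle
    have hi : Function.Injective i.hom := (ModuleCat.mono_iff_injective i).mp ‹_›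
    let e := LinearEquiv.ofInjective (i.hom : Y →ₗ[R] M) hi
    refine ⟨ModuleCat.ofHom (e.symm.toLinearMap.comp (LinearMap.codRestrict (LinearMap.range i.hom) g.hom
      fun x => hle (LinearMap.mem_range_self g.hom x))), ?_⟩
    apply ModuleCat.hom_ext; apply LinearMap.ext; intro x
    have h1 : ∀ y : Y, i.hom y = ((e y : LinearMap.range i.hom) : M) := fun y => rfl
    change i.hom (e.symm ⟨g.hom x, hle (LinearMap.mem_range_self g.hom x)⟩) = g.hom x
    rw [h1, e.apply_symm_apply]
end Aux

namespace GP
variable {C : Type u} [Category.{v} C] [Abelian C] [HasLimits C] [HasColimits C]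
  [WellPowered.{v} C]
  (E : GabrielPopescuEmbedding C) (H : C ⥤ ModuleCat.{v} (End (op E.U)))
  (hQH : H ⋙ E.Q ≅ 𝟭 C) (M : C)

local notation "SS" => oldPreadditiveCoyonedaObj (op E.U)

def eIso : E.Q.obj (H.obj M) ≅ M := hQH.app M

def uMap : H.obj M ⟶ (SS).obj M :=
  E.adj.unit.app (H.obj M) ≫ (SS).map (eIso E H hQH M).hom

def φm : Subobject M → Subobject (H.obj M) := fun A => imageSubobject (H.map A.arrow)

def ψm : Subobject (H.obj M) → Subobject M := fun N =>
  imageSubobject (E.Q.map N.arrow ≫ (eIso E H hQH M).hom)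

def χm : Subobject M → Subobject (H.obj M) := fun A =>
  (ModuleCat.subobjectModule (H.obj M)).symm
    (Submodule.comap (uMap E H hQH M).hom (LinearMap.range ((SS).map A.arrow).hom))

lemma gc : GaloisConnection (ψm E H hQH M) (χm E H hQH M) := by
  intro N A
  haveI : (SS).PreservesMonomorphisms :=
    Functor.preservesMonomorphisms_of_adjunction E.adj
  haveI : Mono ((SS).map A.arrow) := Functor.map_mono _ A.arrow
  rw [ψm, imageSubobject_le_iff, factors_iff_exists]
  have e2 : (∃ g : E.Q.obj (N : ModuleCat _) ⟶ (A : C),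
        g ≫ A.arrow = E.Q.map N.arrow ≫ (eIso E H hQH M).hom) ↔
      (∃ h : (N : ModuleCat _) ⟶ (SS).obj (A : C),
        h ≫ (SS).map A.arrow = N.arrow ≫ uMap E H hQH M) := by
    constructor
    · rintro ⟨t, ht⟩
      refine ⟨E.adj.unit.app (N : ModuleCat _) ≫ (SS).map t, ?_⟩
      have nat : N.arrow ≫ E.adj.unit.app (H.obj M) =
          E.adj.unit.app _ ≫ (SS).map (E.Q.map N.arrow) := by
        simpa using (E.adj.unit.naturality N.arrow)
      rw [Category.assoc, ← Functor.map_comp, ht, uMap, Functor.map_comp]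
      simp only [← Category.assoc]
      congr 1
      exact nat.symm
    · rintro ⟨h, hh⟩
      refine ⟨E.Q.map h ≫ E.adj.counit.app (A : C), ?_⟩
      have nat1 : E.adj.counit.app (A : C) ≫ A.arrow =
          E.Q.map ((SS).map A.arrow) ≫ E.adj.counit.app M := by
        simpa using (E.adj.counit.naturality A.arrow).symm
      have nat2 : E.Q.map ((SS).map (eIso E H hQH M).hom) ≫ E.adj.counit.app M =
          E.adj.counit.app (E.Q.obj (H.obj M)) ≫ (eIso E H hQH M).hom := by
        simpa using (E.adj.counit.naturality (eIso E H hQH M).hom)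
      rw [Category.assoc, nat1, ← Category.assoc, ← Functor.map_comp, hh, uMap,
        Functor.map_comp, Functor.map_comp, Category.assoc, Category.assoc, nat2,
        ← Category.assoc (E.Q.map (E.adj.unit.app (H.obj M)))]
      erw [E.adj.left_triangle_components]
      simp
  rw [e2, exists_factor_iff_range_le]
  show _ ↔ N ≤ (ModuleCat.subobjectModule (H.obj M)).symm _
  rw [OrderIso.le_symm_apply]
  show LinearMap.range (N.arrow ≫ uMap E H hQH M).hom ≤ _ ↔
    LinearMap.range N.arrow.hom ≤ Submodule.comap _ _
  rw [ModuleCat.hom_comp, LinearMap.range_comp, Submodule.map_le_iff_le_comap]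

example (s : Set (Subobject M)) :
    sSup s = Subobject.mk (image.ι (Subobject.smallCoproductDesc.{v} s)) := rfl

lemma psi_phi (hH : PreservesColimits H) (A : Subobject M) :
    ψm E H hQH M (φm E H M A) = A := by
  haveI := hH
  haveI : PreservesColimits E.Q := E.adj.leftAdjoint_preservesColimits
  have h1 : E.Q.map (factorThruImageSubobject (H.map A.arrow)) ≫
        (E.Q.map (φm E H M A).arrow ≫ (eIso E H hQH M).hom) =
      E.Q.map (H.map A.arrow) ≫ (eIso E H hQH M).hom := by
    simp only [φm]
    rw [← Category.assoc, ← Functor.map_comp, imageSubobject_arrow_comp]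
  have h2 : E.Q.map (H.map A.arrow) ≫ (eIso E H hQH M).hom =
      hQH.hom.app (A : C) ≫ A.arrow := by
    simpa [eIso] using hQH.hom.naturality A.arrow
  show imageSubobject (E.Q.map (φm E H M A).arrow ≫ (eIso E H hQH M).hom) = A
  erw [← GP.imageSubobject_epi_comp (E.Q.map (factorThruImageSubobject (H.map A.arrow))) (E.Q.map (φm E H M A).arrow ≫ (eIso E H hQH M).hom)]
  rw [
    h1, h2, imageSubobject_iso_comp, imageSubobject_mono, Subobject.mk_arrow]

lemma phi_mono : Monotone (φm E H M) := by
  intro A B hAB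
  show imageSubobject (H.map A.arrow) ≤ imageSubobject (H.map B.arrow)
  have h : H.map A.arrow = H.map (Subobject.ofLE A B hAB) ≫ H.map B.arrow := by
    rw [← Functor.map_comp, Subobject.ofLE_arrow]
  rw [h]
  exact imageSubobject_comp_le _ _

lemma phi_sSup_le (hH : PreservesColimits H) (s : Set (Subobject M)) :
    φm E H M (sSup s) ≤ sSup (φm E H M '' s) := by
  haveI := hH
  set ob : (equivShrink.{v, _} (Subobject M) '' s) → C :=
    fun j => (((equivShrink.{v, _} (Subobject M)).symm j : Subobject M) : C) with hob
  set c : (∐ ob) ⟶ M := Subobject.smallCoproductDesc.{v} s with hc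
  have harr : (sSup s).arrow = (Subobject.underlyingIso (image.ι c)).hom ≫ image.ι c :=
    (Iso.inv_comp_eq _).mp (Subobject.underlyingIso_arrow (image.ι c))
  have e1 : φm E H M (sSup s) = imageSubobject (H.map (image.ι c)) := by
    show imageSubobject (H.map (sSup s).arrow) = _
    rw [show H.map (sSup s).arrow = H.map (Subobject.underlyingIso (image.ι c)).hom ≫ H.map (image.ι c) from
      (congrArg H.map harr).trans (H.map_comp _ _)]
    exact imageSubobject_iso_comp (H.map (Subobject.underlyingIso (image.ι c)).hom) _
  have e2 : imageSubobject (H.map (image.ι c)) = imageSubobject (H.map c) := by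
    conv_rhs => rw [← image.fac c]
    rw [Functor.map_comp, GP.imageSubobject_epi_comp]
  rw [e1, e2]
  set k := sigmaComparison H ob with hk
  haveI : IsIso k := by
    rw [hk, ← PreservesCoproduct.inv_hom]
    infer_instance
  have hmem : ∀ j : (equivShrink.{v, _} (Subobject M) '' s),
      ((equivShrink.{v, _} (Subobject M)).symm j : Subobject M) ∈ s := by
    rintro ⟨j, B, hB, rfl⟩
    simpa using hB
  set w : ∀ j : (equivShrink.{v, _} (Subobject M) '' s),
      H.obj (ob j) ⟶ ((sSup (φm E H M '' s) : Subobject (H.obj M)) : ModuleCat _) :=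
    fun j => factorThruImageSubobject (H.map ((equivShrink.{v, _} (Subobject M)).symm j).arrow) ≫
      Subobject.ofLE _ _ (le_sSup ⟨_, hmem j, rfl⟩) with hw
  refine imageSubobject_le _ (inv k ≫ Sigma.desc w) ?_
  have hdw : Sigma.desc w ≫ (sSup (φm E H M '' s)).arrow = k ≫ H.map c := by
    apply Sigma.hom_ext
    intro j
    rw [← Category.assoc, colimit.ι_desc, hk]
    show w j ≫ _ = _
    rw [hw]
    simp only [Category.assoc, Subobject.ofLE_arrow]
    rw [ι_comp_sigmaComparison_assoc, ← Functor.map_comp]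
    show _ ≫ (imageSubobject (H.map _)).arrow = _
    rw [imageSubobject_arrow_comp]
    congr 1
    rw [hc]
    simp [Subobject.smallCoproductDesc]
    exact (Sigma.ι_desc (fun j : (equivShrink.{v, _} (Subobject M) '' s) =>
      ((equivShrink.{v, _} (Subobject M)).symm j).arrow) j).symm
  rw [Category.assoc, hdw, IsIso.inv_hom_id_assoc]

lemma modAb6 {R : Type v} [Ring R] {N : ModuleCat.{v} R} {J : Type v}
    (T : J → Set (Subobject N)) (hne : ∀ j, (T j).Nonempty)
    (hdir : ∀ j, DirectedOn (· ≤ ·) (T j)) :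
    ⨅ j, sSup (T j) ≤ ⨆ g : ∀ j, T j, ⨅ j, (g j : Subobject N) := by
  set o := ModuleCat.subobjectModule N with ho
  rw [← o.le_iff_le, o.map_iInf]
  intro x hx
  have hx' : ∀ j, x ∈ o (sSup (T j)) := by
    simpa only [Submodule.mem_iInf] using hx
  have hchoice : ∀ j, ∃ P : Subobject N, P ∈ T j ∧ x ∈ o P := by
    intro j
    have h2 : x ∈ sSup (o '' T j) := by
      have h := hx' j
      rw [o.map_sSup] at h
      rwa [sSup_image]
    have hdir' : DirectedOn (· ≤ ·) (o '' T j) := by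
      rintro _ ⟨a, ha, rfl⟩ _ ⟨b, hb, rfl⟩
      obtain ⟨c, hc, hac, hbc⟩ := hdir j a ha b hb
      exact ⟨o c, ⟨c, hc, rfl⟩, o.monotone hac, o.monotone hbc⟩
    obtain ⟨p, ⟨P, hP, rfl⟩, hxp⟩ :=
      (Submodule.mem_sSup_of_directed ((hne j).image o) hdir').mp h2
    exact ⟨P, hP, hxp⟩
  choose f hf1 hf2 using hchoice
  have : x ∈ o (⨅ j, f j) := by
    rw [o.map_iInf, Submodule.mem_iInf]
    exact hf2
  have hle : (⨅ j, f j : Subobject N) ≤ ⨆ g : ∀ j, T j, ⨅ j, (g j : Subobject N) :=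
    le_iSup (fun g : ∀ j, T j => ⨅ j, (g j : Subobject N)) (fun j => ⟨f j, hf1 j⟩)
  exact o.monotone hle this

end GP

end GPAux

/-- If a Grothendieck category `C` with a Gabriel–Popescu embedding `(U, Λ, S, Q)` admits a
cocontinuous functor `H : C ⥤ Mod Λ` with `Q ∘ H ≅ 𝟭 C`, then `C` satisfies Ab6: for every
object `M`, every family of nonempty upward-directed sets `S j` of subobjects of `M` satisfies
`⨅ j, sSup (S j) = ⨆ (f : ∀ j, S j), ⨅ j, f j` in the subobject lattice of `M`. -/
theorem stmt2 {C : Type u} [Category.{v} C] [Abelian C] [HasLimits C] [HasColimits C] [AB5 C]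
    [WellPowered.{v} C]
    (E : GabrielPopescuEmbedding C)
    (H : C ⥤ ModuleCat.{v} (End (op E.U)))
    (hH : PreservesColimits H)
    (hQH : H ⋙ E.Q ≅ 𝟭 C) :
    ∀ (M : C) (J : Type v) (S : J → Set (Subobject M)),
      (∀ j, (S j).Nonempty) → (∀ j, DirectedOn (· ≤ ·) (S j)) →
      ⨅ j, sSup (S j) = ⨆ f : (∀ j, S j), ⨅ j, (f j : Subobject M) := by
  intro M J S hne hdir
  refine le_antisymm ?_ (iSup_le fun f => le_iInf fun j => (iInf_le _ j).trans (@le_sSup (Subobject M) CompleteLattice.toCompleteSemilatticeSup _ _ (f j).2))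
  have hgc := GP.gc E H hQH M
  have hψφ := GP.psi_phi E H hQH M hH
  have hφm := GP.phi_mono E H M
  set φ := GP.φm E H M with hφ
  set ψ := GP.ψm E H hQH M with hψ
  set T : J → Set (Subobject (H.obj M)) := fun j => φ '' S j with hT
  have h1 : (⨅ j, sSup (S j)) = ψ (φ (⨅ j, sSup (S j))) := (hψφ _).symm
  rw [h1]
  have h2 : φ (⨅ j, sSup (S j)) ≤ ⨅ j, sSup (T j) := by
    refine le_iInf fun j => ?_
    exact le_trans (hφm (iInf_le _ j)) (GP.phi_sSup_le E H M hH (S j))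
  have hTdir : ∀ j, DirectedOn (· ≤ ·) (T j) := by
    intro j
    rintro _ ⟨a, ha, rfl⟩ _ ⟨b, hb, rfl⟩
    obtain ⟨c, hc, hac, hbc⟩ := hdir j a ha b hb
    exact ⟨φ c, ⟨c, hc, rfl⟩, hφm hac, hφm hbc⟩
  have h3 : (⨅ j, sSup (T j)) ≤ ⨆ g : ∀ j, T j, ⨅ j, (g j : Subobject (H.obj M)) :=
    GP.modAb6 T (fun j => (hne j).image _) hTdir
  refine le_trans (hgc.monotone_l (le_trans h2 h3)) ?_
  rw [hgc.l_iSup]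
  refine iSup_le fun g => ?_
  have hch : ∀ j, ∃ A : Subobject M, A ∈ S j ∧ φ A = (g j : Subobject (H.obj M)) := by
    intro j
    obtain ⟨A, hA, hA2⟩ := (g j).2
    exact ⟨A, hA, hA2⟩
  choose f hf1 hf2 using hch
  have h5 : ψ (⨅ j, (g j : Subobject (H.obj M))) ≤ ⨅ j, (f j : Subobject M) :=
    le_iInf fun j => le_trans (hgc.monotone_l (iInf_le _ j)) (by rw [← hf2 j, hψφ])
  refine h5.trans ?_
  exact le_iSup (fun f' : ∀ j, S j => ⨅ j, (f' j : Subobject M)) (fun j => ⟨f j, hf1 j⟩)
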